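/- arXiv:0904.0942 — 4 statements merged into one kernel-verified Lean document; each statement's English description precedes it below -/
import Mathlib

section
/- Let ε > 0, Δ > 0, and d ≥ 1. Let λ_b denote the Laplace probability measure on ℝ with scale b, i.e., the measure with density x ↦ (1/(2b))·exp(−|x|/b) with respect to Lebesgue measure, and let μ_v denote the d-fold product of λ_{Δ/ε} translated by the vector v ∈ ℝ^d (the distribution of v plus i.i.d. Laplace(Δ/ε) noise in each coordinate). Then for any two vectors v, v' ∈ ℝ^d with ‖v − v'‖₁ ≤ Δ and any measurable set S ⊆ ℝ^d, μ_v(S) ≤ exp(ε) · μ_{v'}(S). Consequently, if a query sequence Q : D → ℝ^d has sensitivity at most Δ (meaning ‖Q(I) − Q(I')‖₁ ≤ Δ for all neighboring databases I, I'), then the mechanism that outputs Q(I) plus i.i.d. Laplace(Δ/ε) noise in each coordinate is ε-differentially private. -/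
open MeasureTheory

/-- The Laplace measure on `ℝ` with scale `b`: density `x ↦ (1/(2b))·exp(−|x|/b)`
with respect to Lebesgue measure. -/
noncomputable def laplaceMeasure (b : ℝ) : Measure ℝ :=
  volume.withDensity fun x => ENNReal.ofReal ((2 * b)⁻¹ * Real.exp (-|x| / b))

/-- The distribution of the vector `v` plus i.i.d. `Laplace(b)` noise in each coordinate:
the `d`-fold product of the Laplace measure with scale `b` translated by `v`
(coordinate `i` has density `x ↦ (1/(2b))·exp(−|x − v i|/b)`). -/
noncomputable def laplaceMechanism {d : ℕ} (b : ℝ) (v : Fin d → ℝ) :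
    Measure (Fin d → ℝ) :=
  Measure.pi fun i =>
    volume.withDensity fun x => ENNReal.ofReal ((2 * b)⁻¹ * Real.exp (-|x - v i| / b))

/-- Tonelli for a product of single-coordinate functions over a finite product measure. -/
lemma lintegral_pi_prod : ∀ {n : ℕ} (μ : Fin n → Measure ℝ), (∀ i, SigmaFinite (μ i)) →
    ∀ (g : Fin n → ℝ → ENNReal), (∀ i, Measurable (g i)) →
    ∫⁻ x, ∏ i, g i (x i) ∂(Measure.pi μ) = ∏ i, ∫⁻ y, g i y ∂(μ i) := by
  intro n
  induction n with
  | zero => intro μ _ g _; simp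
  | succ n ih =>
    intro μ hμ g hg
    haveI := hμ
    have h := measurePreserving_piFinSuccAbove μ 0
    have hG : Measurable fun p : ℝ × (Fin n → ℝ) => g 0 p.1 * ∏ j, g (Fin.succ j) (p.2 j) := by
      apply Measurable.mul ((hg 0).comp measurable_fst)
      exact (Finset.measurable_prod _ fun j _ =>
        (hg _).comp ((measurable_pi_apply j).comp measurable_snd))
    have key : ∫⁻ x, ∏ i, g i (x i) ∂(Measure.pi μ)
        = ∫⁻ p, g 0 p.1 * ∏ j, g (Fin.succ j) (p.2 j)
          ∂((μ 0).prod (Measure.pi fun j => μ (Fin.succAbove 0 j))) := by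
      rw [← h.lintegral_comp hG]
      refine lintegral_congr fun x => ?_
      simp [MeasurableEquiv.piFinSuccAbove_apply, Fin.prod_univ_succ, Fin.zero_succAbove,
        Fin.tail]
    have hprodmeas : Measurable fun y : Fin n → ℝ => ∏ j, g (Fin.succ j) (y j) :=
      Finset.measurable_prod _ fun j _ => (hg _).comp (measurable_pi_apply j)
    have htonelli := lintegral_prod_mul (μ := μ 0)
      (ν := Measure.pi fun j => μ (Fin.succAbove 0 j)) (f := g 0)
      (g := fun y : Fin n → ℝ => ∏ j, g (Fin.succ j) (y j))
      (hg 0).aemeasurable hprodmeas.aemeasurable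
    rw [key, htonelli, ih _ (fun j => hμ _) _ (fun j => hg _), Fin.prod_univ_succ]
    simp [Fin.zero_succAbove]

lemma laplaceMechanism_eq {d : ℕ} (b : ℝ) (v : Fin d → ℝ) :
    laplaceMechanism b v = (Measure.pi fun _ : Fin d => (volume : Measure ℝ)).withDensity
      (fun x => ∏ i, ENNReal.ofReal ((2 * b)⁻¹ * Real.exp (-|x i - v i| / b))) := by
  set g : Fin d → ℝ → ENNReal :=
    fun i x => ENNReal.ofReal ((2 * b)⁻¹ * Real.exp (-|x - v i| / b)) with hgdef
  have hg : ∀ i, Measurable (g i) := by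
    intro i
    apply Measurable.ennreal_ofReal
    fun_prop
  rw [laplaceMechanism]
  refine Measure.pi_eq fun s hs => ?_
  rw [withDensity_apply _ (MeasurableSet.univ_pi hs)]
  have : ∀ x : Fin d → ℝ, (Set.pi Set.univ s).indicator
      (fun x => ∏ i, g i (x i)) x = ∏ i, (s i).indicator (g i) (x i) := by
    intro x
    by_cases hx : x ∈ Set.pi Set.univ s
    · rw [Set.indicator_of_mem hx]
      exact Finset.prod_congr rfl fun i _ =>
        (Set.indicator_of_mem (hx i (Set.mem_univ i)) _).symm
    · rw [Set.indicator_of_notMem hx]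
      simp only [Set.mem_pi, Set.mem_univ, forall_true_left] at hx
      push_neg at hx
      obtain ⟨i, hi⟩ := hx
      exact (Finset.prod_eq_zero (Finset.mem_univ i)
        (Set.indicator_of_notMem hi _)).symm
  rw [← lintegral_indicator (MeasurableSet.univ_pi hs)]
  change ∫⁻ a, (Set.univ.pi s).indicator (fun x => ∏ i, g i (x i)) a ∂_ = _
  simp_rw [this]
  rw [lintegral_pi_prod _ (fun _ => inferInstance) _
    (fun i => (hg i).indicator (hs i))]
  refine Finset.prod_congr rfl fun i _ => ?_
  rw [lintegral_indicator (hs i), withDensity_apply _ (hs i)]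

/-- **The Laplace mechanism is ε-differentially private.**
(1) For any `v, v'` with `‖v − v'‖₁ ≤ Δ` and any measurable `S`,
`μ_v(S) ≤ exp(ε)·μ_{v'}(S)`, where `μ_v` is `v` plus i.i.d. `Laplace(Δ/ε)` noise.
(2) Consequently, if a query sequence `Q` has sensitivity at most `Δ` with respect to the
neighbor relation `nbrs`, then the mechanism `I ↦ Q(I) + ⟨Lap(Δ/ε)⟩^d` is
ε-differentially private. -/
theorem laplace_mechanism_differentially_private
    {D : Type*} (nbrs : D → D → Prop) (ε Δ : ℝ) (hε : 0 < ε) (hΔ : 0 < Δ)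
    (d : ℕ) (hd : 1 ≤ d) :
    (∀ v v' : Fin d → ℝ, (∑ i, |v i - v' i|) ≤ Δ →
      ∀ S : Set (Fin d → ℝ), MeasurableSet S →
        laplaceMechanism (Δ / ε) v S ≤ ENNReal.ofReal (Real.exp ε) * laplaceMechanism (Δ / ε) v' S)
    ∧ (∀ Q : D → Fin d → ℝ,
        (∀ I I', nbrs I I' → (∑ i, |Q I i - Q I' i|) ≤ Δ) →
        ∀ I I', nbrs I I' → ∀ S : Set (Fin d → ℝ), MeasurableSet S →
          laplaceMechanism (Δ / ε) (Q I) S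
            ≤ ENNReal.ofReal (Real.exp ε) * laplaceMechanism (Δ / ε) (Q I') S) := by
  have hb : 0 < Δ / ε := div_pos hΔ hε
  set b := Δ / ε with hbdef
  have main : ∀ v v' : Fin d → ℝ, (∑ i, |v i - v' i|) ≤ Δ →
      ∀ S : Set (Fin d → ℝ), MeasurableSet S →
        laplaceMechanism b v S ≤ ENNReal.ofReal (Real.exp ε) * laplaceMechanism b v' S := by
    intro v v' hvv' S hS
    rw [laplaceMechanism_eq, laplaceMechanism_eq,
      withDensity_apply _ hS, withDensity_apply _ hS, ← lintegral_const_mul']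
    swap
    · exact ENNReal.ofReal_ne_top
    have hmeas : Measurable fun x : Fin d → ℝ =>
        ∏ i, ENNReal.ofReal ((2 * b)⁻¹ * Real.exp (-|x i - v' i| / b)) :=
      Finset.measurable_prod _ fun i _ => Measurable.ennreal_ofReal (by fun_prop)
    refine setLIntegral_mono_ae (hmeas.const_mul _).aemeasurable
      (Filter.Eventually.of_forall fun x _ => ?_)
    -- pointwise density comparison
    have hnn : ∀ i : Fin d, (0:ℝ) ≤ (2 * b)⁻¹ * Real.exp (-|x i - v' i| / b) :=
      fun i => mul_nonneg (inv_nonneg.mpr (by linarith)) (Real.exp_nonneg _)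
    rw [← ENNReal.ofReal_prod_of_nonneg fun i _ =>
        mul_nonneg (inv_nonneg.mpr (by linarith)) (Real.exp_nonneg _),
      ← ENNReal.ofReal_prod_of_nonneg fun i _ => hnn i,
      ← ENNReal.ofReal_mul (Real.exp_nonneg _)]
    refine ENNReal.ofReal_le_ofReal ?_
    have key : ∀ i : Fin d, (2 * b)⁻¹ * Real.exp (-|x i - v i| / b)
        ≤ Real.exp (|v i - v' i| / b) * ((2 * b)⁻¹ * Real.exp (-|x i - v' i| / b)) := by
      intro i
      rw [mul_left_comm]
      refine mul_le_mul_of_nonneg_left ?_ (inv_nonneg.mpr (by linarith))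
      rw [← Real.exp_add]
      refine Real.exp_le_exp.mpr ?_
      rw [← add_div, div_le_div_iff_of_pos_right hb]
      have := abs_sub_abs_le_abs_sub (x i - v' i) (x i - v i)
      have h2 : (x i - v' i) - (x i - v i) = v i - v' i := by ring
      rw [h2] at this
      linarith
    calc ∏ i, (2 * b)⁻¹ * Real.exp (-|x i - v i| / b)
        ≤ ∏ i, Real.exp (|v i - v' i| / b) * ((2 * b)⁻¹ * Real.exp (-|x i - v' i| / b)) :=
          Finset.prod_le_prod (fun i _ => mul_nonneg (inv_nonneg.mpr (by linarith))
            (Real.exp_nonneg _)) (fun i _ => key i)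
      _ = (∏ i, Real.exp (|v i - v' i| / b)) *
            ∏ i, (2 * b)⁻¹ * Real.exp (-|x i - v' i| / b) := Finset.prod_mul_distrib
      _ ≤ Real.exp ε * ∏ i, (2 * b)⁻¹ * Real.exp (-|x i - v' i| / b) := by
          refine mul_le_mul_of_nonneg_right ?_
            (Finset.prod_nonneg fun i _ => hnn i)
          rw [← Real.exp_sum]
          refine Real.exp_le_exp.mpr ?_
          rw [← Finset.sum_div, div_le_iff₀ hb]
          calc (∑ i, |v i - v' i|) ≤ Δ := hvv'
            _ = ε * (Δ / ε) := by field_simp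
  exact ⟨main, fun Q hQ I I' hI S hS => main (Q I) (Q I') (hQ I I' hI) S hS⟩
end

section
/- Let x, x' ∈ ℕ^n be two count vectors such that for exactly one index i, x'[i] = x[i] + 1, and x'[j] = x[j] for all j ≠ i. Let sort(x) and sort(x') denote the nondecreasing rearrangements of x and x'. Then ‖sort(x) − sort(x')‖₁ = 1; in fact, sort(x) and sort(x') agree at all positions except one, where they differ by exactly 1. (Hence the sorted query sequence S has sensitivity 1.) -/
/-- The multiset of values of `f` over `Fin n`, as `Multiset.map f univ.val`. -/
private lemma ofFn_coe_eq (n : ℕ) (f : Fin n → ℕ) :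
    ((List.ofFn f : List ℕ) : Multiset ℕ) = Multiset.map f Finset.univ.val := by
  rw [List.ofFn_eq_map]
  rfl

private lemma map_update (n : ℕ) (f : Fin n → ℕ) (i : Fin n) (a : ℕ) :
    Multiset.map (Function.update f i a) Finset.univ.val
      = a ::ₘ Multiset.map f (Finset.univ.erase i).val := by
  have h1 : (Finset.univ : Finset (Fin n)) = insert i (Finset.univ.erase i) :=
    (Finset.insert_erase (Finset.mem_univ i)).symm
  conv_lhs => rw [h1]
  rw [Finset.insert_val_of_notMem (Finset.notMem_erase i _), Multiset.map_cons,
    Function.update_self]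
  congr 1
  apply Multiset.map_congr rfl
  intro j hj
  have : j ≠ i := (Finset.mem_erase.mp (Finset.mem_def.mpr hj)).1
  simp [Function.update_of_ne this]

private lemma map_self (n : ℕ) (f : Fin n → ℕ) (i : Fin n) :
    Multiset.map f Finset.univ.val
      = f i ::ₘ Multiset.map f (Finset.univ.erase i).val := by
  have h1 : (Finset.univ : Finset (Fin n)) = insert i (Finset.univ.erase i) :=
    (Finset.insert_erase (Finset.mem_univ i)).symm
  conv_lhs => rw [h1]
  rw [Finset.insert_val_of_notMem (Finset.notMem_erase i _), Multiset.map_cons]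

/-- **Sensitivity of the sorted (unattributed histogram) query is 1.**
If `x'` is obtained from the count vector `x : Fin n → ℕ` by incrementing exactly one
coordinate by `1`, then the nondecreasing rearrangements `sort(x)` and `sort(x')`
(given by `x ∘ Tuple.sort x` and `x' ∘ Tuple.sort x'`) satisfy
`‖sort(x) − sort(x')‖₁ = 1`; in fact they agree at all positions except one,
where they differ by exactly `1`. -/
theorem sorted_query_sensitivity_one (n : ℕ) (x x' : Fin n → ℕ) (i : Fin n)
    (hx : x' i = x i + 1) (hother : ∀ j, j ≠ i → x' j = x j) :
    (∑ j, ((x' (Tuple.sort x' j) : ℤ) - (x (Tuple.sort x j) : ℤ)).natAbs) = 1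
    ∧ ∃ j₀ : Fin n, x' (Tuple.sort x' j₀) = x (Tuple.sort x j₀) + 1
        ∧ ∀ j, j ≠ j₀ → x' (Tuple.sort x' j) = x (Tuple.sort x j) := by
  set g : Fin n → ℕ := x ∘ Tuple.sort x with hg
  have hgmono : Monotone g := Tuple.monotone_sort x
  set c : ℕ := x i with hc
  -- the fiber of c under g is nonempty
  have hFne : (Finset.univ.filter (fun j => g j = c)).Nonempty := by
    refine ⟨(Tuple.sort x)⁻¹ i, ?_⟩
    simp [hg, hc]
  set j₀ : Fin n := (Finset.univ.filter (fun j => g j = c)).max' hFne with hj₀def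
  have hgj₀ : g j₀ = c := by
    have := (Finset.univ.filter (fun j => g j = c)).max'_mem hFne
    simpa using this
  have hmax : ∀ j, g j = c → j ≤ j₀ := by
    intro j hj
    exact Finset.le_max' _ j (by simpa using hj)
  set h : Fin n → ℕ := Function.update g j₀ (c + 1) with hh
  have hhj₀ : h j₀ = c + 1 := Function.update_self _ _ _
  have hhne : ∀ j, j ≠ j₀ → h j = g j := fun j hj => Function.update_of_ne hj _ _
  -- h is monotone
  have hhmono : Monotone h := by
    intro a b hab
    by_cases hb : b = j₀
    · subst hb
      rw [hhj₀]
      by_cases ha : a = j₀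
      · subst ha; rw [hhj₀]
      · rw [hhne a ha]
        have : g a ≤ g j₀ := hgmono hab
        omega
    · rw [hhne b hb]
      by_cases ha : a = j₀
      · subst ha
        rw [hhj₀]
        have hlt : j₀ < b := lt_of_le_of_ne hab (fun e => hb e.symm)
        have h1 : c ≤ g b := hgj₀ ▸ hgmono hab
        have h2 : g b ≠ c := fun e => absurd (hmax b e) (not_le.mpr hlt)
        omega
      · rw [hhne a ha]; exact hgmono hab
  -- multiset equalities
  have hgx : Multiset.map g Finset.univ.val = Multiset.map x Finset.univ.val := by
    have := (Tuple.sort x).ofFn_comp_perm x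
    have h2 : ((List.ofFn (x ∘ Tuple.sort x) : List ℕ) : Multiset ℕ) = (List.ofFn x : List ℕ) :=
      Multiset.coe_eq_coe.mpr this
    rw [ofFn_coe_eq, ofFn_coe_eq] at h2
    exact h2
  have hT : Multiset.map g (Finset.univ.erase j₀).val
      = Multiset.map x (Finset.univ.erase i).val := by
    have e1 := map_self n g j₀
    have e2 := map_self n x i
    rw [hgj₀] at e1
    rw [← hc] at e2
    have : c ::ₘ Multiset.map g (Finset.univ.erase j₀).val
        = c ::ₘ Multiset.map x (Finset.univ.erase i).val := by
      rw [← e1, ← e2, hgx]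
    exact (Multiset.cons_inj_right c).mp this
  have hhx' : Multiset.map h Finset.univ.val = Multiset.map x' Finset.univ.val := by
    have e1 : Multiset.map h Finset.univ.val
        = (c + 1) ::ₘ Multiset.map g (Finset.univ.erase j₀).val := map_update n g j₀ (c + 1)
    have e2 : Multiset.map x' Finset.univ.val
        = (c + 1) ::ₘ Multiset.map x (Finset.univ.erase i).val := by
      rw [map_self n x' i, hx]
      congr 1
      apply Multiset.map_congr rfl
      intro j hj
      exact hother j (Finset.mem_erase.mp (Finset.mem_def.mpr hj)).1
    rw [e1, e2, hT]
  -- h = x' ∘ sort x'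
  have hkey : h = x' ∘ Tuple.sort x' := by
    apply List.ofFn_injective
    apply List.Perm.eq_of_sortedLE hhmono.sortedLE_ofFn (Tuple.monotone_sort x').sortedLE_ofFn
    apply Multiset.coe_eq_coe.mp
    rw [ofFn_coe_eq, ofFn_coe_eq, hhx']
    have := (Tuple.sort x').ofFn_comp_perm x'
    have h2 : ((List.ofFn (x' ∘ Tuple.sort x') : List ℕ) : Multiset ℕ) = (List.ofFn x' : List ℕ) :=
      Multiset.coe_eq_coe.mpr this
    rw [ofFn_coe_eq, ofFn_coe_eq] at h2
    exact h2.symm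
  have hval : ∀ j, x' (Tuple.sort x' j) = h j := fun j => by rw [hkey]; rfl
  have hne' : ∀ j, j ≠ j₀ → x' (Tuple.sort x' j) = x (Tuple.sort x j) := by
    intro j hj
    rw [hval j, hhne j hj]; rfl
  have heq₀ : x' (Tuple.sort x' j₀) = x (Tuple.sort x j₀) + 1 := by
    rw [hval j₀, hhj₀]
    have : x (Tuple.sort x j₀) = c := hgj₀
    omega
  refine ⟨?_, j₀, heq₀, hne'⟩
  rw [Finset.sum_eq_single j₀]
  · rw [heq₀]
    push_cast
    omega
  · intro j _ hj
    rw [hne' j hj]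
    simp
  · intro habs
    exact absurd (Finset.mem_univ j₀) habs
end

section
/- Let s̃ ∈ ℝ^n, and for 1 ≤ i ≤ j ≤ n let M̃[i,j] = (Σ_{k=i}^{j} s̃[k])/(j−i+1) denote the mean of the entries of s̃ with indices in [i,j]. For each k ∈ {1,…,n}, define L_k = min_{j ∈ [k,n]} max_{i ∈ [1,j]} M̃[i,j] and U_k = max_{i ∈ [1,k]} min_{j ∈ [i,n]} M̃[i,j]. Then L_k = U_k for every k, and the vector s̄ defined by s̄[k] = L_k = U_k is the unique minimizer of ‖s̃ − t‖₂ over all nondecreasing vectors t ∈ ℝ^n (i.e., t[1] ≤ t[2] ≤ … ≤ t[n]). -/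
namespace IsoAux

noncomputable def slope (S : ℕ → ℝ) (a b : ℕ) : ℝ := (S b - S a) / ((b : ℝ) - (a : ℝ))

lemma cast_pos {a b : ℕ} (h : a < b) : (0:ℝ) < (b:ℝ) - a := by
  have : (a:ℝ) < b := by exact_mod_cast h
  linarith

lemma slope_le_iff {S : ℕ → ℝ} {a b : ℕ} (h : a < b) {t : ℝ} :
    slope S a b ≤ t ↔ S b - S a ≤ t * ((b:ℝ) - a) := by
  rw [slope, div_le_iff₀ (cast_pos h)]

lemma le_slope_iff {S : ℕ → ℝ} {a b : ℕ} (h : a < b) {t : ℝ} :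
    t ≤ slope S a b ↔ t * ((b:ℝ) - a) ≤ S b - S a := by
  rw [slope, le_div_iff₀ (cast_pos h)]

lemma lt_slope_iff {S : ℕ → ℝ} {a b : ℕ} (h : a < b) {t : ℝ} :
    t < slope S a b ↔ t * ((b:ℝ) - a) < S b - S a := by
  rw [slope, lt_div_iff₀ (cast_pos h)]

lemma slope_mul {S : ℕ → ℝ} {a b : ℕ} (h : a < b) :
    slope S a b * ((b:ℝ) - a) = S b - S a := by
  rw [slope, div_mul_cancel₀]
  exact ne_of_gt (cast_pos h)

/-- The key combinatorial lemma: existence of a "support pair" `(a, b)` with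
`a ≤ k < b ≤ n` such that the line through `(a, S a)` and `(b, S b)` lies below `S` on `[0,n]`. -/
lemma exists_support (S : ℕ → ℝ) {n k : ℕ} (hk : k < n) :
    ∃ a b : ℕ, a ≤ k ∧ k < b ∧ b ≤ n ∧
      (∀ c ≤ n, S a + slope S a b * ((c:ℝ) - a) ≤ S c) := by
  classical
  set Mf : ℕ → ℝ := fun a =>
    if h : a < n then (Finset.Icc (a+1) n).inf' (by rw [Finset.nonempty_Icc]; omega) (slope S a)
    else 0 with hMf
  have hMfle : ∀ a, a < n → ∀ d, a < d → d ≤ n → Mf a ≤ slope S a d := by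
    intro a ha d h1 h2
    simp only [hMf, dif_pos ha]
    exact Finset.inf'_le _ (Finset.mem_Icc.2 ⟨h1, h2⟩)
  have hMfex : ∀ a, ∀ h : a < n, ∃ d, a < d ∧ d ≤ n ∧ Mf a = slope S a d := by
    intro a ha
    obtain ⟨d, hd, hde⟩ := Finset.exists_mem_eq_inf'
      (s := Finset.Icc (a+1) n) (by rw [Finset.nonempty_Icc]; omega) (slope S a)
    rw [Finset.mem_Icc] at hd
    exact ⟨d, by omega, hd.2, by simp only [hMf, dif_pos ha]; exact hde⟩
  have hMfge : ∀ a, a < n → ∀ t : ℝ, (∀ d, a < d → d ≤ n → t ≤ slope S a d) → t ≤ Mf a := by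
    intro a ha t ht
    simp only [hMf, dif_pos ha]
    apply Finset.le_inf'
    intro d hd
    rw [Finset.mem_Icc] at hd
    exact ht d (by omega) hd.2
  -- the sup over [0,k] of Mf
  have hKne : (Finset.range (k+1)).Nonempty := ⟨0, by simp⟩
  set U : ℝ := (Finset.range (k+1)).sup' hKne Mf with hU
  set T : Finset ℕ := (Finset.range (k+1)).filter (fun a => Mf a = U) with hT
  have hTne : T.Nonempty := by
    obtain ⟨a, ha, hae⟩ := Finset.exists_mem_eq_sup' hKne Mf
    exact ⟨a, Finset.mem_filter.2 ⟨ha, hae.symm⟩⟩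
  set a₀ : ℕ := T.max' hTne with ha₀
  have ha₀T : a₀ ∈ T := T.max'_mem hTne
  have ha₀k : a₀ ≤ k := by
    have := (Finset.mem_filter.1 ha₀T).1; rw [Finset.mem_range] at this; omega
  have ha₀U : Mf a₀ = U := (Finset.mem_filter.1 ha₀T).2
  have ha₀n : a₀ < n := lt_of_le_of_lt ha₀k hk
  obtain ⟨b₀, hab, hbn, hbs⟩ := hMfex a₀ ha₀n
  set σ : ℝ := Mf a₀ with hσ
  have hge : ∀ d, a₀ < d → d ≤ n → σ * ((d:ℝ) - a₀) ≤ S d - S a₀ := by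
    intro d h1 h2
    exact (le_slope_iff h1).1 (hMfle a₀ ha₀n d h1 h2)
  have heqb : S b₀ - S a₀ = σ * ((b₀:ℝ) - a₀) := by
    rw [hbs]; exact (slope_mul hab).symm
  -- left sublemma
  have hleft : ∀ c, c < a₀ → S a₀ - S c ≤ σ * ((a₀:ℝ) - c) := by
    have main : ∀ d c, a₀ - c ≤ d → c < a₀ → S a₀ - S c ≤ σ * ((a₀:ℝ) - c) := by
      intro d
      induction d with
      | zero => intro c hc hca; omega
      | succ d ih =>
        intro c hc hca
        by_contra hgt
        push_neg at hgt
        have hcn : c < n := by omega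
        have hlt : σ < Mf c := by
          simp only [hMf, dif_pos hcn]
          rw [Finset.lt_inf'_iff]
          intro e he
          rw [Finset.mem_Icc] at he
          rcases lt_trichotomy e a₀ with h1 | h1 | h1
          · have hce : c < e := by omega
            have hde : a₀ - e ≤ d := by omega
            have hea := ih e hde h1
            rw [lt_slope_iff hce]
            have hr : σ * ((a₀:ℝ) - c) - σ * ((a₀:ℝ) - e) = σ * ((e:ℝ) - c) := by ring
            linarith
          · subst h1
            rw [lt_slope_iff (by omega : c < a₀)]
            linarith
          · have h2 := hge e h1 he.2
            rw [lt_slope_iff (by omega : c < e)]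
            have hr : σ * ((a₀:ℝ) - c) + σ * ((e:ℝ) - a₀) = σ * ((e:ℝ) - c) := by ring
            linarith
        have hle : Mf c ≤ σ := by
          rw [ha₀U]
          exact Finset.le_sup' Mf (Finset.mem_range.2 (by omega))
        linarith
    intro c hc; exact main (a₀ - c) c le_rfl hc
  -- b₀ > k
  have hbk : k < b₀ := by
    by_contra hcon
    push_neg at hcon
    have hbn' : b₀ < n := lt_of_le_of_lt hcon hk
    have h1 : σ ≤ Mf b₀ := by
      apply hMfge b₀ hbn'
      intro d hd1 hd2
      rw [le_slope_iff hd1]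
      have h2 := hge d (by omega) hd2
      have hr : σ * ((d:ℝ) - a₀) - σ * ((b₀:ℝ) - a₀) = σ * ((d:ℝ) - b₀) := by ring
      linarith
    have h2 : Mf b₀ ≤ U := Finset.le_sup' Mf (Finset.mem_range.2 (by omega))
    have h3 : b₀ ∈ T := Finset.mem_filter.2 ⟨Finset.mem_range.2 (by omega),
      le_antisymm h2 (by rw [← ha₀U]; exact h1)⟩
    have := T.le_max' b₀ h3
    omega
  refine ⟨a₀, b₀, ha₀k, hbk, hbn, ?_⟩
  rw [← hbs]
  intro c hc
  rcases lt_trichotomy c a₀ with h1 | h1 | h1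
  · have := hleft c h1
    have hr : σ * ((c:ℝ) - a₀) = -(σ * ((a₀:ℝ) - c)) := by ring
    linarith
  · subst h1; simp
  · have := hge c h1 hc
    linarith

end IsoAux

/-- `seqMean t i j` is the mean `M̃[i,j]` of the entries of `t` with indices in `[i,j]`. -/
noncomputable def seqMean {n : ℕ} (t : Fin n → ℝ) (i j : Fin n) : ℝ :=
  (∑ k ∈ Finset.Icc i j, t k) / (((j : ℕ) - (i : ℕ) + 1 : ℕ) : ℝ)

/-- `isoL t k = min_{j ∈ [k,n]} max_{i ∈ [1,j]} M̃[i,j]`. -/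
noncomputable def isoL {n : ℕ} (t : Fin n → ℝ) (k : Fin n) : ℝ :=
  (Finset.univ.filter fun j => k ≤ j).inf' ⟨k, by simp⟩ fun j =>
    (Finset.univ.filter fun i => i ≤ j).sup' ⟨j, by simp⟩ fun i => seqMean t i j

/-- `isoU t k = max_{i ∈ [1,k]} min_{j ∈ [i,n]} M̃[i,j]`. -/
noncomputable def isoU {n : ℕ} (t : Fin n → ℝ) (k : Fin n) : ℝ :=
  (Finset.univ.filter fun i => i ≤ k).sup' ⟨k, by simp⟩ fun i =>
    (Finset.univ.filter fun j => i ≤ j).inf' ⟨i, by simp⟩ fun j => seqMean t i j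


namespace IsoAux

noncomputable def SS {n : ℕ} (st : Fin n → ℝ) : ℕ → ℝ :=
  fun m => ∑ k ∈ Finset.range m, (if h : k < n then st ⟨k, h⟩ else 0)

lemma seqMean_eq {n : ℕ} (st : Fin n → ℝ) {i j : Fin n} (hij : i ≤ j) :
    seqMean st i j = slope (SS st) i ((j:ℕ)+1) := by
  have hij' : (i:ℕ) ≤ (j:ℕ) := hij
  have h1 : ∑ k ∈ Finset.Icc i j, st k
      = ∑ m ∈ Finset.Icc (i:ℕ) (j:ℕ), (if h : m < n then st ⟨m, h⟩ else 0) := by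
    rw [← Fin.map_valEmbedding_Icc, Finset.sum_map]
    refine Finset.sum_congr rfl fun x _ => ?_
    rw [show (Fin.valEmbedding x : ℕ) = (x:ℕ) from rfl, dif_pos x.isLt]
  have h2 : ∑ m ∈ Finset.Icc (i:ℕ) (j:ℕ), (if h : m < n then st ⟨m, h⟩ else 0)
      = SS st ((j:ℕ)+1) - SS st (i:ℕ) := by
    rw [← Finset.Ico_add_one_right_eq_Icc, Finset.sum_Ico_eq_sub _ (by omega)]
    rfl
  rw [seqMean, h1, h2, slope]
  congr 1
  push_cast [Nat.cast_sub hij']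
  ring

lemma isoU_le_isoL {n : ℕ} (st : Fin n → ℝ) (k : Fin n) : isoU st k ≤ isoL st k := by
  rw [isoU, isoL]
  apply Finset.sup'_le
  intro i hi
  apply Finset.le_inf'
  intro j hj
  simp only [Finset.mem_filter, Finset.mem_univ, true_and] at hi hj
  have hij : i ≤ j := hi.trans hj
  have hm1 : j ∈ Finset.univ.filter fun j' => i ≤ j' := by
    simp only [Finset.mem_filter, Finset.mem_univ, true_and]; exact hij
  have hm2 : i ∈ Finset.univ.filter fun i' => i' ≤ j := by
    simp only [Finset.mem_filter, Finset.mem_univ, true_and]; exact hij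
  exact le_trans (Finset.inf'_le (fun j' => seqMean st i j') hm1)
    (Finset.le_sup' (fun i' => seqMean st i' j) hm2)

lemma iso_eq_of_support {n : ℕ} (st : Fin n → ℝ) {k a b : ℕ} (hkn : k < n)
    (hak : a ≤ k) (hkb : k < b) (hbn : b ≤ n)
    (hsupp : ∀ c ≤ n, SS st a + slope (SS st) a b * ((c:ℝ) - a) ≤ SS st c) :
    isoL st ⟨k, hkn⟩ = slope (SS st) a b ∧ isoU st ⟨k, hkn⟩ = slope (SS st) a b := by
  set σ : ℝ := slope (SS st) a b with hσ
  have hab : a < b := lt_of_le_of_lt hak hkb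
  have hSb : SS st b - SS st a = σ * ((b:ℝ) - a) := (slope_mul hab).symm
  have hb1 : b - 1 < n := by omega
  -- isoL ≤ σ
  have hL : isoL st ⟨k, hkn⟩ ≤ σ := by
    rw [isoL]
    have hmem : (⟨b-1, hb1⟩ : Fin n) ∈ Finset.univ.filter fun j => (⟨k, hkn⟩ : Fin n) ≤ j := by
      simp only [Finset.mem_filter, Finset.mem_univ, true_and, Fin.mk_le_mk]
      omega
    refine le_trans (Finset.inf'_le _ hmem) ?_
    apply Finset.sup'_le
    intro i hi
    simp only [Finset.mem_filter, Finset.mem_univ, true_and] at hi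
    rw [seqMean_eq st hi]
    have hj₀v : ((⟨b-1, hb1⟩ : Fin n) : ℕ) + 1 = b := by show b - 1 + 1 = b; omega
    rw [hj₀v]
    have hib : (i:ℕ) < b := by
      have h3 : (i:ℕ) ≤ b - 1 := Fin.le_def.1 hi
      omega
    rw [slope_le_iff hib]
    have h1 := hsupp i (by omega)
    have hr : σ * ((b:ℝ) - a) - σ * ((i:ℝ) - a) = σ * ((b:ℝ) - i) := by ring
    linarith
  -- σ ≤ isoU
  have hU : σ ≤ isoU st ⟨k, hkn⟩ := by
    rw [isoU]
    have hmem : (⟨a, by omega⟩ : Fin n) ∈ Finset.univ.filter fun i => i ≤ (⟨k, hkn⟩ : Fin n) := by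
      simp only [Finset.mem_filter, Finset.mem_univ, true_and, Fin.mk_le_mk]
      omega
    refine le_trans ?_ (Finset.le_sup' _ hmem)
    apply Finset.le_inf'
    intro j hj
    simp only [Finset.mem_filter, Finset.mem_univ, true_and] at hj
    rw [seqMean_eq st hj]
    have haj : a < (j:ℕ) + 1 := by
      have h3 : a ≤ (j:ℕ) := Fin.le_def.1 hj
      omega
    rw [show ((⟨a, by omega⟩ : Fin n) : ℕ) = a from rfl, le_slope_iff haj]
    have h1 := hsupp ((j:ℕ)+1) (by have := j.isLt; omega)
    push_cast at h1 ⊢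
    linarith
  have hUL := isoU_le_isoL st ⟨k, hkn⟩
  constructor <;> linarith

lemma isoL_mono {n : ℕ} (st : Fin n → ℝ) : Monotone (isoL st) := by
  intro k k' hkk
  rw [isoL, isoL]
  apply Finset.inf'_mono
  intro j hj
  simp only [Finset.mem_filter, Finset.mem_univ, true_and] at hj ⊢
  exact hkk.trans hj

end IsoAux

namespace IsoAux

lemma abel_sum (D w : ℕ → ℝ) (m : ℕ) :
    ∑ k ∈ Finset.range (m+1), (D (k+1) - D k) * w k
      = D (m+1) * w m - D 0 * w 0 - ∑ k ∈ Finset.range m, D (k+1) * (w (k+1) - w k) := by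
  induction m with
  | zero => simp [Finset.sum_range_one]; ring
  | succ m ih =>
    rw [Finset.sum_range_succ, ih,
      Finset.sum_range_succ (f := fun k => D (k+1) * (w (k+1) - w k))]
    ring

end IsoAux


/-- **Closed form for the minimum `L₂` nondecreasing (isotonic) solution.**
For `s̃ ∈ ℝ^n`, with `L_k = min_{j ∈ [k,n]} max_{i ∈ [1,j]} M̃[i,j]` and
`U_k = max_{i ∈ [1,k]} min_{j ∈ [i,n]} M̃[i,j]`, we have `L_k = U_k` for every `k`,
and `s̄ = L = U` is the unique nondecreasing vector minimizing `‖s̃ − t‖₂`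
over all nondecreasing `t ∈ ℝ^n`. -/
theorem isotonic_minmax_closed_form (n : ℕ) (hn : 1 ≤ n) (st : Fin n → ℝ) :
    (∀ k, isoL st k = isoU st k)
    ∧ Monotone (isoL st)
    ∧ (∀ t : Fin n → ℝ, Monotone t →
        ∑ k, (st k - isoL st k) ^ 2 ≤ ∑ k, (st k - t k) ^ 2)
    ∧ (∀ t : Fin n → ℝ, Monotone t →
        ∑ k, (st k - t k) ^ 2 = ∑ k, (st k - isoL st k) ^ 2 → t = isoL st) := by
  classical
  obtain ⟨N, rfl⟩ : ∃ N, n = N + 1 := ⟨n - 1, by omega⟩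
  choose A B hA hB hBn hsupp using
    fun k (h : k < N + 1) => IsoAux.exists_support (IsoAux.SS st) (n := N+1) (k := k) h
  -- first two conjuncts
  have conj1 : ∀ k : Fin (N+1), isoL st k = isoU st k := by
    intro k
    obtain ⟨e1, e2⟩ := IsoAux.iso_eq_of_support st k.isLt (hA _ k.isLt) (hB _ k.isLt)
      (hBn _ k.isLt) (hsupp _ k.isLt)
    simp only [Fin.eta] at e1 e2
    rw [e1, e2]
  have conj2 : Monotone (isoL st) := IsoAux.isoL_mono st
  -- ℕ-valued versions
  set g : ℕ → ℝ := fun k => if h : k < N + 1 then isoL st ⟨k, h⟩ else 0 with hgdef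
  have hg : ∀ k (h : k < N + 1), g k = IsoAux.slope (IsoAux.SS st) (A k h) (B k h) := by
    intro k h
    rw [hgdef]
    simp only [dif_pos h]
    exact (IsoAux.iso_eq_of_support st h (hA _ h) (hB _ h) (hBn _ h) (hsupp _ h)).1
  have hgmono : ∀ m, m + 1 < N + 1 → g m ≤ g (m+1) := by
    intro m h
    rw [hgdef]
    simp only [dif_pos h, dif_pos (by omega : m < N+1)]
    exact conj2 (by exact Nat.le_succ m : (⟨m, by omega⟩ : Fin (N+1)) ≤ ⟨m+1, h⟩)
  set G : ℕ → ℝ := fun m => ∑ j ∈ Finset.range m, g j with hGdef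
  have hG0 : G 0 = 0 := by rw [hGdef]; simp
  have hS0 : IsoAux.SS st 0 = 0 := by simp [IsoAux.SS]
  have hGs : ∀ m, G (m+1) = G m + g m := by
    intro m; rw [hGdef]; exact Finset.sum_range_succ _ _
  have hSs : ∀ k, IsoAux.SS st (k+1) = IsoAux.SS st k + (if h : k < N+1 then st ⟨k, h⟩ else 0) :=
    fun k => Finset.sum_range_succ _ _
  have hpair : ∀ m (h : m < N+1),
      IsoAux.SS st (B m h) - IsoAux.SS st (A m h) = g m * ((B m h : ℝ) - A m h) := by
    intro m h
    rw [hg m h]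
    exact (IsoAux.slope_mul (lt_of_le_of_lt (hA m h) (hB m h))).symm
  have hsupp' : ∀ m (h : m < N+1), ∀ c ≤ N+1,
      IsoAux.SS st (A m h) + g m * ((c:ℝ) - A m h) ≤ IsoAux.SS st c := by
    intro m h c hc
    rw [hg m h]
    exact hsupp m h c hc
  -- lower invariant : ℓ_m(m) ≤ G m
  have lower : ∀ m, ∀ h : m < N+1,
      IsoAux.SS st (A m h) + g m * ((m:ℝ) - A m h) ≤ G m := by
    intro m
    induction m with
    | zero =>
      intro h
      have hA0 : A 0 h = 0 := Nat.le_zero.1 (hA 0 h)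
      rw [hA0, hG0, hS0]
      norm_num
    | succ m ih =>
      intro h
      have hm : m < N+1 := by omega
      have h1 := ih hm
      have hb1 : m < B m hm := hB m hm
      have hb2 : B m hm ≤ N+1 := hBn m hm
      have e1 := hsupp' (m+1) h (B m hm) hb2
      have e2 := hpair m hm
      have e3 : g m * ((B m hm : ℝ) - ((m:ℝ)+1)) ≤ g (m+1) * ((B m hm : ℝ) - ((m:ℝ)+1)) := by
        apply mul_le_mul_of_nonneg_right (hgmono m h)
        have : ((m:ℝ)+1) ≤ (B m hm : ℝ) := by exact_mod_cast hb1
        linarith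
      have e4 := hGs m
      push_cast at e1 e2 e3 h1 ⊢
      linarith [e1, e2, e3, e4, h1]
  -- upper invariant : G (m+1) ≤ ℓ_m(m+1)
  have upper : ∀ m, ∀ h : m < N+1,
      G (m+1) ≤ IsoAux.SS st (A m h) + g m * (((m:ℝ)+1) - A m h) := by
    intro m
    induction m with
    | zero =>
      intro h
      have hA0 : A 0 h = 0 := Nat.le_zero.1 (hA 0 h)
      rw [hA0, hGs 0, hG0, hS0]
      norm_num
    | succ m ih =>
      intro h
      have hm : m < N+1 := by omega
      have h1 := ih hm
      have ha'1 : A (m+1) h ≤ m+1 := hA (m+1) h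
      have e1 := hsupp' m hm (A (m+1) h) (by omega)
      have e3 : g m * (((m:ℝ)+1) - (A (m+1) h : ℝ)) ≤ g (m+1) * (((m:ℝ)+1) - (A (m+1) h : ℝ)) := by
        apply mul_le_mul_of_nonneg_right (hgmono m h)
        have : (A (m+1) h : ℝ) ≤ (m:ℝ)+1 := by exact_mod_cast ha'1
        linarith
      have e4 := hGs (m+1)
      push_cast at e1 e3 h1 ⊢
      linarith [e1, e3, e4, h1]
  have hGle : ∀ m, m ≤ N+1 → G m ≤ IsoAux.SS st m := by
    intro m hm
    match m with
    | 0 => rw [hG0, hS0]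
    | (m+1) =>
      have h1 := upper m (by omega)
      have h2 := hsupp' m (by omega) (m+1) hm
      push_cast at h1 h2 ⊢
      linarith
  have hGn : G (N+1) = IsoAux.SS st (N+1) := by
    have hN : N < N+1 := by omega
    have hBNeq : B N hN = N+1 := by have h1 := hB N hN; have h2 := hBn N hN; omega
    have h1 := lower N hN
    have e2 := hpair N hN
    rw [hBNeq] at e2
    have e4 := hGs N
    have h2 := hGle (N+1) le_rfl
    apply le_antisymm h2
    push_cast at h1 e2 ⊢
    linarith [h1, e2, e4]
  have hjump : ∀ m, 1 ≤ m → m < N+1 → g (m-1) < g m → IsoAux.SS st m = G m := by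
    intro m h1 h2 hlt
    have hm1 : m - 1 < N+1 := by omega
    have hAm : A m h2 = m := by
      by_contra hne
      have hle : A m h2 ≤ m - 1 := by have := hA m h2; omega
      have heq := (IsoAux.iso_eq_of_support st hm1 hle (by have := hB m h2; omega)
        (hBn m h2) (hsupp m h2)).1
      have gm1 : g (m-1) = isoL st ⟨m-1, hm1⟩ := by rw [hgdef]; simp only [dif_pos hm1]
      rw [gm1, heq, ← hg m h2] at hlt
      exact lt_irrefl _ hlt
    have h3 := lower m h2
    rw [hAm] at h3
    have h5 : g m * ((m:ℝ) - (m:ℝ)) = 0 := by ring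
    have h4 := hGle m (by omega)
    apply le_antisymm _ h4
    linarith
  -- the cross term
  have hcross : ∀ t : Fin (N+1) → ℝ, Monotone t →
      0 ≤ ∑ k : Fin (N+1), (st k - isoL st k) * (isoL st k - t k) := by
    intro t ht
    set tN : ℕ → ℝ := fun k => if h : k < N+1 then t ⟨k, h⟩ else 0 with htN
    set D : ℕ → ℝ := fun m => IsoAux.SS st m - G m with hD
    set w : ℕ → ℝ := fun k => g k - tN k with hw
    have habel := IsoAux.abel_sum D w N
    have hDN : D (N+1) = 0 := by rw [hD]; simp only; rw [hGn]; ring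
    have hD0 : D 0 = 0 := by rw [hD]; simp only; rw [hG0, hS0]; ring
    have hterm : ∀ k ∈ Finset.range N, D (k+1) * (w (k+1) - w k) ≤ 0 := by
      intro k hk
      rw [Finset.mem_range] at hk
      have hk1 : k + 1 ≤ N+1 := by omega
      have hDnn : 0 ≤ D (k+1) := by rw [hD]; simp only; linarith [hGle (k+1) hk1]
      rcases lt_or_ge (g k) (g (k+1)) with hlt | hle
      · have hz := hjump (k+1) (by omega) (by omega) (by simpa using hlt)
        have : D (k+1) = 0 := by rw [hD]; simp only; rw [hz]; ring
        rw [this]; simp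
      · have hwk : w (k+1) - w k ≤ 0 := by
          rw [hw]; simp only
          have ht1 : tN k ≤ tN (k+1) := by
            rw [htN]
            simp only [dif_pos (by omega : k < N+1), dif_pos (by omega : k+1 < N+1)]
            exact ht (by exact Nat.le_succ k : (⟨k, by omega⟩ : Fin (N+1)) ≤ ⟨k+1, by omega⟩)
          linarith
        exact mul_nonpos_iff.2 (Or.inl ⟨hDnn, hwk⟩)
    have hsum : ∑ k ∈ Finset.range N, D (k+1) * (w (k+1) - w k) ≤ 0 :=
      Finset.sum_nonpos hterm
    have hcross0 : 0 ≤ ∑ k ∈ Finset.range (N+1), (D (k+1) - D k) * w k := by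
      rw [habel, hDN, hD0]
      linarith
    have hbridge : ∑ k ∈ Finset.range (N+1), (D (k+1) - D k) * w k
        = ∑ k : Fin (N+1), (st k - isoL st k) * (isoL st k - t k) := by
      rw [← Fin.sum_univ_eq_sum_range (fun k => (D (k+1) - D k) * w k) (N+1)]
      refine Finset.sum_congr rfl fun x _ => ?_
      have hx : (x:ℕ) < N+1 := x.isLt
      have hDd : D ((x:ℕ)+1) - D (x:ℕ) = st x - isoL st x := by
        rw [hD]; simp only
        have e1 := hSs (x:ℕ)
        have e2 := hGs (x:ℕ)
        rw [hgdef] at e2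
        simp only [dif_pos hx] at e1 e2
        simp only [Fin.eta] at e1 e2
        linarith
      have hwd : w (x:ℕ) = isoL st x - t x := by
        rw [hw, htN, hgdef]
        simp only [dif_pos hx, Fin.eta]
      rw [hDd, hwd]
    rw [← hbridge]
    exact hcross0
  -- the decomposition identity
  have hkey : ∀ t : Fin (N+1) → ℝ,
      ∑ k, (st k - t k) ^ 2 = ∑ k, (st k - isoL st k) ^ 2 + ∑ k, (isoL st k - t k) ^ 2
        + 2 * ∑ k, (st k - isoL st k) * (isoL st k - t k) := by
    intro t
    rw [Finset.mul_sum, ← Finset.sum_add_distrib, ← Finset.sum_add_distrib]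
    exact Finset.sum_congr rfl fun k _ => by ring
  have hsqnn : ∀ t : Fin (N+1) → ℝ, (0:ℝ) ≤ ∑ k, (isoL st k - t k) ^ 2 :=
    fun t => Finset.sum_nonneg fun k _ => sq_nonneg _
  refine ⟨conj1, conj2, ?_, ?_⟩
  · intro t ht
    have := hcross t ht
    have := hsqnn t
    rw [hkey t]
    linarith
  · intro t ht heq
    have h1 := hcross t ht
    have h2 := hsqnn t
    rw [hkey t] at heq
    have hzero : ∑ k, (isoL st k - t k) ^ 2 = 0 := by linarith
    funext k
    have := (Finset.sum_eq_zero_iff_of_nonneg (fun i _ => sq_nonneg (isoL st i - t i))).1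
      hzero k (Finset.mem_univ k)
    have := pow_eq_zero_iff (n := 2) (by norm_num) |>.1 this
    linarith [sub_eq_zero.1 this]
end

section
/- Consider the complete k-ary tree T with ℓ levels of nodes (k ≥ 2), and let h̃ : nodes(T) → ℝ be arbitrary. Define z : nodes(T) → ℝ bottom-up by: z[v] = h̃[v] if v is a leaf; and for an internal node v at height l (leaves have height 1), z[v] = ((k^l − k^{l−1})/(k^l − 1))·h̃[v] + ((k^{l−1} − 1)/(k^l − 1))·Σ_{u ∈ children(v)} z[u]. Define h̄ : nodes(T) → ℝ top-down by: h̄[r] = z[r] at the root r, and for a non-root node v with parent u, h̄[v] = z[v] + (1/k)·(h̄[u] − Σ_{w ∈ children(u)} z[w]). Then h̄ is the unique minimizer of Σ_{v} (t[v] − h̃[v])² over all t : nodes(T) → ℝ satisfying the consistency constraints t[v] = Σ_{u ∈ children(v)} t[u] for every internal node v. -/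
/-- A node of the complete `k`-ary tree with `ℓ` levels of nodes: a depth
`d ∈ {0, …, ℓ−1}` (root depth `0`, leaves depth `ℓ−1`) and an index among the
`k^d` nodes at that depth.  A node at depth `d` has height `ℓ − d` (leaves height 1). -/
abbrev TreeNode (k ℓ : ℕ) : Type := Σ d : Fin ℓ, Fin (k ^ (d : ℕ))

/-- The node at depth `d` with index `j`. -/
def mkNode {k ℓ : ℕ} (d : ℕ) (hd : d < ℓ) (j : Fin (k ^ d)) : TreeNode k ℓ := ⟨⟨d, hd⟩, j⟩

/-- The `r`-th child of the node at depth `d` with index `j`. -/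
def childNode {k ℓ : ℕ} (d : ℕ) (hd : d + 1 < ℓ) (j : Fin (k ^ d)) (r : Fin k) :
    TreeNode k ℓ :=
  ⟨⟨d + 1, hd⟩, ⟨(j : ℕ) * k + (r : ℕ), by
    have hj := j.isLt
    have hr := r.isLt
    calc (j : ℕ) * k + (r : ℕ) < ((j : ℕ) + 1) * k := by nlinarith
      _ ≤ k ^ d * k := Nat.mul_le_mul_right _ (by omega)
      _ = k ^ (d + 1) := (pow_succ k d).symm⟩⟩

/-- A node-value vector is consistent if every internal node's value equals the sum of
its children's values. -/
def Consistent {k ℓ : ℕ} (t : TreeNode k ℓ → ℝ) : Prop :=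
  ∀ (d : ℕ) (hd : d + 1 < ℓ) (j : Fin (k ^ d)),
    t (mkNode d (by omega) j) = ∑ r : Fin k, t (childNode d hd j r)

namespace TreeAux

lemma ltA {d ℓ : ℕ} (hd : d + 1 < ℓ) : d < ℓ := by omega

lemma ltB {ℓ : ℕ} (hl : 1 ≤ ℓ) : 0 < ℓ := by omega

lemma ltC {ℓ : ℕ} (hl : 1 ≤ ℓ) : ℓ - 1 < ℓ := by omega

lemma chIdx_lt {k d : ℕ} (j : Fin (k ^ d)) (r : Fin k) :
    (j : ℕ) * k + (r : ℕ) < k ^ (d + 1) := by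
  have hj := j.isLt
  have hr := r.isLt
  calc (j : ℕ) * k + (r : ℕ) < ((j : ℕ) + 1) * k := by nlinarith
    _ ≤ k ^ d * k := Nat.mul_le_mul_right _ (by omega)
    _ = k ^ (d + 1) := (pow_succ k d).symm

lemma divk_lt {k d : ℕ} (hk : 0 < k) (j : Fin (k ^ (d + 1))) : (j : ℕ) / k < k ^ d := by
  have hj := j.isLt
  exact (Nat.div_lt_iff_lt_mul hk).2 (by rw [← pow_succ]; exact hj)

lemma mk_child {k ℓ : ℕ} (d : ℕ) (hd : d + 1 < ℓ) (j : Fin (k ^ d)) (r : Fin k) :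
    mkNode (d + 1) hd ⟨(j : ℕ) * k + (r : ℕ), chIdx_lt j r⟩ = childNode d hd j r := rfl

def splitEquiv (k : ℕ) (hk : 0 < k) (d : ℕ) : Fin (k ^ d) × Fin k ≃ Fin (k ^ (d + 1)) where
  toFun p := ⟨(p.1 : ℕ) * k + (p.2 : ℕ), chIdx_lt p.1 p.2⟩
  invFun x := (⟨(x : ℕ) / k, divk_lt hk x⟩, ⟨(x : ℕ) % k, Nat.mod_lt _ hk⟩)
  left_inv p := by
    ext
    · simp [Nat.mul_add_div hk, Nat.div_eq_of_lt p.2.isLt, mul_comm]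
    · show ((p.1 : ℕ) * k + (p.2 : ℕ)) % k = (p.2 : ℕ)
      rw [add_comm, Nat.add_mul_mod_self_right, Nat.mod_eq_of_lt p.2.isLt]
  right_inv x := by
    ext
    simp [Nat.div_add_mod']

lemma sum_split {k : ℕ} (hk : 0 < k) {d : ℕ} (f : Fin (k ^ (d + 1)) → ℝ) :
    ∑ x, f x = ∑ j : Fin (k ^ d), ∑ r : Fin k, f ⟨(j : ℕ) * k + (r : ℕ), chIdx_lt j r⟩ := by
  rw [← (Fintype.sum_equiv (splitEquiv k hk d) (fun p => f (splitEquiv k hk d p)) f (fun p => rfl)),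
    Fintype.sum_prod_type]
  rfl

variable {k ℓ : ℕ} (hb ht : TreeNode k ℓ → ℝ) (hk : 0 < k)

def Apath : (d : ℕ) → d < ℓ → Fin (k ^ d) → ℝ
  | 0, hd, j => hb (mkNode 0 hd j) - ht (mkNode 0 hd j)
  | d + 1, hd, j =>
      Apath d (ltA hd) ⟨(j : ℕ) / k, divk_lt hk j⟩
        + (hb (mkNode (d + 1) hd j) - ht (mkNode (d + 1) hd j))

lemma Apath_child (d : ℕ) (hd : d + 1 < ℓ) (j : Fin (k ^ d)) (r : Fin k) :
    Apath hb ht hk (d + 1) hd ⟨(j : ℕ) * k + (r : ℕ), chIdx_lt j r⟩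
      = Apath hb ht hk d (ltA hd) j
          + (hb (childNode d hd j r) - ht (childNode d hd j r)) := by
  show Apath hb ht hk d _ _ + _ = _
  rw [mk_child]
  congr 2
  ext
  simp [Nat.mul_add_div hk, Nat.div_eq_of_lt r.isLt, mul_comm]



lemma keyA (hk2 : 2 ≤ k) (hl : 1 ≤ ℓ) (z : TreeNode k ℓ → ℝ)
    (hzint : ∀ (d : ℕ) (hd : d + 1 < ℓ) (j : Fin (k ^ d)),
      z (mkNode d (ltA hd) j)
        = (((k : ℝ) ^ (ℓ - d) - (k : ℝ) ^ (ℓ - d - 1)) / ((k : ℝ) ^ (ℓ - d) - 1))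
              * ht (mkNode d (ltA hd) j)
          + (((k : ℝ) ^ (ℓ - d - 1) - 1) / ((k : ℝ) ^ (ℓ - d) - 1))
              * ∑ r : Fin k, z (childNode d hd j r))
    (hbroot : hb (mkNode 0 (ltB hl) ⟨0, by simp⟩) = z (mkNode 0 (ltB hl) ⟨0, by simp⟩))
    (hbrec : ∀ (d : ℕ) (hd : d + 1 < ℓ) (j : Fin (k ^ d)) (r : Fin k),
      hb (childNode d hd j r)
        = z (childNode d hd j r)
          + (1 / (k : ℝ)) * (hb (mkNode d (ltA hd) j) - ∑ r' : Fin k, z (childNode d hd j r'))) :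
    ∀ (d : ℕ) (hd : d + 1 < ℓ) (j : Fin (k ^ d)),
      Apath hb ht hk d (ltA hd) j
        = ((1 - (k : ℝ) ^ (ℓ - d - 1)) / ((k : ℝ) ^ (ℓ - d - 1) * ((k : ℝ) - 1)))
            * (hb (mkNode d (ltA hd) j) - ∑ r : Fin k, z (childNode d hd j r)) := by
  have hK1 : (1 : ℝ) < (k : ℝ) := by exact_mod_cast (by omega : 1 < k)
  have hKne : (k : ℝ) ≠ 0 := by positivity
  have hKm1 : (k : ℝ) - 1 ≠ 0 := by linarith
  intro d
  induction d with
  | zero =>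
    intro hd j
    have hj0 : j = ⟨0, by simp⟩ := by
      ext
      have := j.isLt
      simp only [pow_zero, Fin.val_mk] at this ⊢
      omega
    subst hj0
    have e4 := hzint 0 hd ⟨0, by simp⟩
    show hb (mkNode 0 _ _) - ht (mkNode 0 _ _) = _
    rw [hbroot]
    obtain ⟨n, hn⟩ : ∃ n, ℓ - 1 = n + 1 := ⟨ℓ - 2, by omega⟩
    have h1 : ℓ - 0 = (n + 1) + 1 := by omega
    have h2 : ℓ - 0 - 1 = n + 1 := by omega
    rw [h1, show (n + 1) + 1 - 1 = n + 1 from rfl] at e4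
    rw [h2]
    have p1 : (1:ℝ) < (k:ℝ) ^ (n + 1 + 1) := one_lt_pow₀ hK1 (by omega)
    have p2 : ((k:ℝ) ^ (n + 1 + 1) - 1) ≠ 0 := by linarith
    have p3 : ((k:ℝ) ^ (n + 1)) ≠ 0 := by positivity
    rw [e4]
    field_simp
    ring
  | succ d IH =>
    intro hd j'
    have hdP : d + 1 < ℓ := by omega
    set jp : Fin (k ^ d) := ⟨(j' : ℕ) / k, divk_lt hk j'⟩ with hjp
    set rp : Fin k := ⟨(j' : ℕ) % k, Nat.mod_lt _ hk⟩ with hrp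
    have hfin : (⟨(jp : ℕ) * k + (rp : ℕ), chIdx_lt jp rp⟩ : Fin (k ^ (d + 1))) = j' := by
      ext
      exact Nat.div_add_mod' (j' : ℕ) k
    have e2 := Apath_child hb ht hk d hdP jp rp
    have e1 := IH hdP jp
    have e3 := hbrec d hdP jp rp
    have e4 := hzint (d + 1) hd ⟨(jp : ℕ) * k + (rp : ℕ), chIdx_lt jp rp⟩
    rw [mk_child] at e4
    rw [← hfin, e2, mk_child, e3, e1, e4]
    obtain ⟨m, hm⟩ : ∃ m, ℓ - d - 2 = m + 1 := ⟨ℓ - d - 3, by omega⟩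
    have hA : ℓ - (d + 1) - 1 = m + 1 := by omega
    have hB : ℓ - (d + 1) = m + 2 := by omega
    have hC : ℓ - d - 1 = m + 2 := by omega
    rw [hA, hB, hC]
    have p1 : (1:ℝ) < (k:ℝ) ^ (m + 1) := one_lt_pow₀ hK1 (by omega)
    have p1' : ((k:ℝ) ^ (m + 1) - 1) ≠ 0 := by linarith
    have p2 : (1:ℝ) < (k:ℝ) ^ (m + 2) := one_lt_pow₀ hK1 (by omega)
    have p2' : ((k:ℝ) ^ (m + 2) - 1) ≠ 0 := by linarith
    have p3 : ((k:ℝ) ^ (m + 1)) ≠ 0 := by positivity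
    have p4 : ((k:ℝ) ^ (m + 2)) ≠ 0 := by positivity
    field_simp
    ring

lemma Apath_leaf (hk2 : 2 ≤ k) (hl : 1 ≤ ℓ) (z : TreeNode k ℓ → ℝ)
    (hzleaf : ∀ j : Fin (k ^ (ℓ - 1)),
      z (mkNode (ℓ - 1) (ltC hl) j) = ht (mkNode (ℓ - 1) (ltC hl) j))
    (hzint : ∀ (d : ℕ) (hd : d + 1 < ℓ) (j : Fin (k ^ d)),
      z (mkNode d (ltA hd) j)
        = (((k : ℝ) ^ (ℓ - d) - (k : ℝ) ^ (ℓ - d - 1)) / ((k : ℝ) ^ (ℓ - d) - 1))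
              * ht (mkNode d (ltA hd) j)
          + (((k : ℝ) ^ (ℓ - d - 1) - 1) / ((k : ℝ) ^ (ℓ - d) - 1))
              * ∑ r : Fin k, z (childNode d hd j r))
    (hbroot : hb (mkNode 0 (ltB hl) ⟨0, by simp⟩) = z (mkNode 0 (ltB hl) ⟨0, by simp⟩))
    (hbrec : ∀ (d : ℕ) (hd : d + 1 < ℓ) (j : Fin (k ^ d)) (r : Fin k),
      hb (childNode d hd j r)
        = z (childNode d hd j r)
          + (1 / (k : ℝ)) * (hb (mkNode d (ltA hd) j) - ∑ r' : Fin k, z (childNode d hd j r'))) :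
    ∀ j : Fin (k ^ (ℓ - 1)), Apath hb ht hk (ℓ - 1) (ltC hl) j = 0 := by
  have hK1 : (1 : ℝ) < (k : ℝ) := by exact_mod_cast (by omega : 1 < k)
  have hKne : (k : ℝ) ≠ 0 := by positivity
  have hKm1 : (k : ℝ) - 1 ≠ 0 := by linarith
  obtain rfl | hl2 : ℓ = 1 ∨ 2 ≤ ℓ := by omega
  · intro j
    have hj0 : j = ⟨0, by simp⟩ := by
      ext
      have := j.isLt
      simp only [show (1:ℕ) - 1 = 0 from rfl, pow_zero, Fin.val_mk] at this ⊢
      omega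
    subst hj0
    have e : z (mkNode 0 (by omega) ⟨0, by simp⟩) = ht (mkNode 0 (by omega) ⟨0, by simp⟩) :=
      hzleaf ⟨0, pow_pos hk _⟩
    show hb (mkNode 0 (by omega) ⟨0, by simp⟩) - ht (mkNode 0 (by omega) ⟨0, by simp⟩) = 0
    rw [hbroot, e]
    exact sub_self _
  · obtain ⟨d, rfl⟩ : ∃ d, ℓ = d + 2 := ⟨ℓ - 2, by omega⟩
    intro j'
    show Apath hb ht hk (d + 1) (by omega) j' = 0
    have hdP : d + 1 < d + 2 := by omega
    set jp : Fin (k ^ d) := ⟨(j' : ℕ) / k, divk_lt hk j'⟩ with hjp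
    set rp : Fin k := ⟨(j' : ℕ) % k, Nat.mod_lt _ hk⟩ with hrp
    have hfin : (⟨(jp : ℕ) * k + (rp : ℕ), chIdx_lt jp rp⟩ : Fin (k ^ (d + 1))) = j' := by
      ext
      exact Nat.div_add_mod' (j' : ℕ) k
    have e2 := Apath_child hb ht hk d hdP jp rp
    have e1 := keyA hb ht hk hk2 (by omega) z hzint hbroot hbrec d hdP jp
    have e3 := hbrec d hdP jp rp
    have e5 : z (childNode d hdP jp rp) = ht (childNode d hdP jp rp) :=
      hzleaf ⟨(jp : ℕ) * k + (rp : ℕ), chIdx_lt jp rp⟩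
    rw [← hfin, e2, e3, e1, e5]
    rw [show d + 2 - d - 1 = 1 by omega]
    field_simp
    ring

noncomputable def Lnat (s : TreeNode k ℓ → ℝ) (e : ℕ) : ℝ :=
  if h : e < ℓ then
    ∑ j : Fin (k ^ e), (hb (mkNode e h j) - ht (mkNode e h j)) * s (mkNode e h j)
  else 0

lemma sumApath (s : TreeNode k ℓ → ℝ) (hs : Consistent s) :
    ∀ (d : ℕ) (hd : d < ℓ),
      ∑ j : Fin (k ^ d), Apath hb ht hk d hd j * s (mkNode d hd j)
        = ∑ e ∈ Finset.range (d + 1), Lnat hb ht s e := by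
  intro d
  induction d with
  | zero =>
    intro hd
    rw [Finset.sum_range_one]
    unfold Lnat
    rw [dif_pos hd]
    rfl
  | succ d IH =>
    intro hd
    have hdl : d < ℓ := by omega
    rw [sum_split hk (fun j' => Apath hb ht hk (d+1) hd j' * s (mkNode (d+1) hd j'))]
    have step : ∀ j : Fin (k ^ d), ∀ r : Fin k,
        Apath hb ht hk (d+1) hd ⟨(j : ℕ) * k + (r : ℕ), chIdx_lt j r⟩
            * s (mkNode (d+1) hd ⟨(j : ℕ) * k + (r : ℕ), chIdx_lt j r⟩)
          = Apath hb ht hk d hdl j * s (childNode d hd j r)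
            + (hb (childNode d hd j r) - ht (childNode d hd j r)) * s (childNode d hd j r) := by
      intro j r
      rw [mk_child, Apath_child, add_mul]
    calc ∑ j : Fin (k ^ d), ∑ r : Fin k,
          Apath hb ht hk (d+1) hd ⟨(j : ℕ) * k + (r : ℕ), chIdx_lt j r⟩
            * s (mkNode (d+1) hd ⟨(j : ℕ) * k + (r : ℕ), chIdx_lt j r⟩)
        = ∑ j : Fin (k ^ d), ∑ r : Fin k,
            (Apath hb ht hk d hdl j * s (childNode d hd j r)
              + (hb (childNode d hd j r) - ht (childNode d hd j r)) * s (childNode d hd j r)) := by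
          exact Finset.sum_congr rfl fun j _ => Finset.sum_congr rfl fun r _ => step j r
      _ = (∑ j : Fin (k ^ d), Apath hb ht hk d hdl j * s (mkNode d hdl j))
            + ∑ j : Fin (k ^ d), ∑ r : Fin k,
                (hb (childNode d hd j r) - ht (childNode d hd j r)) * s (childNode d hd j r) := by
          rw [← Finset.sum_add_distrib]
          refine Finset.sum_congr rfl fun j _ => ?_
          rw [Finset.sum_add_distrib, ← Finset.mul_sum, ← hs d hd j]
      _ = ∑ e ∈ Finset.range (d + 1 + 1), Lnat hb ht s e := by
          rw [Finset.sum_range_succ, IH hdl]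
          congr 1
          unfold Lnat
          rw [dif_pos hd]
          rw [sum_split hk (fun j' => (hb (mkNode (d+1) hd j') - ht (mkNode (d+1) hd j'))
            * s (mkNode (d+1) hd j'))]
          exact (Finset.sum_congr rfl fun j _ => Finset.sum_congr rfl fun r _ => by
            rw [mk_child]).symm

lemma ortho (hl : 1 ≤ ℓ) (s : TreeNode k ℓ → ℝ) (hs : Consistent s)
    (hA : ∀ j : Fin (k ^ (ℓ - 1)), Apath hb ht hk (ℓ - 1) (ltC hl) j = 0) :
    ∑ v, (hb v - ht v) * s v = 0 := by
  have h1 : ∑ v, (hb v - ht v) * s v = ∑ e ∈ Finset.range ℓ, Lnat hb ht s e := by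
    rw [← Finset.univ_sigma_univ, Finset.sum_sigma]
    rw [← Fin.sum_univ_eq_sum_range (fun e => Lnat hb ht s e) ℓ]
    refine Finset.sum_congr rfl fun d _ => ?_
    unfold Lnat
    rw [dif_pos d.isLt]
    rfl
  have h2 : Finset.range ℓ = Finset.range ((ℓ - 1) + 1) := by congr 1; omega
  rw [h1, h2, ← sumApath hb ht hk s hs (ℓ - 1) (by omega)]
  exact Finset.sum_eq_zero fun j _ => by rw [hA j, zero_mul]



end TreeAux

/-- **Closed form for the minimum `L₂` consistent solution on the tree.**
Let `h̃` be arbitrary node values on the complete `k`-ary tree with `ℓ` levels.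
Let `z` be defined bottom-up by `z[v] = h̃[v]` at leaves and, at an internal node `v`
of height `l`, `z[v] = ((k^l − k^{l−1})/(k^l − 1))·h̃[v] + ((k^{l−1} − 1)/(k^l − 1))·Σ_{u ∈ children(v)} z[u]`;
and let `h̄` be defined top-down by `h̄[root] = z[root]` and
`h̄[v] = z[v] + (1/k)·(h̄[parent v] − Σ_{w ∈ children(parent v)} z[w])` otherwise.
Then `h̄` is the unique minimizer of `Σ_v (t[v] − h̃[v])²` over all consistent `t`. -/
theorem tree_inference_closed_form (k ℓ : ℕ) (hk : 2 ≤ k) (hℓ : 1 ≤ ℓ)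
    (ht z hb : TreeNode k ℓ → ℝ)
    (hzleaf : ∀ j : Fin (k ^ (ℓ - 1)),
      z (mkNode (ℓ - 1) (by omega) j) = ht (mkNode (ℓ - 1) (by omega) j))
    (hzint : ∀ (d : ℕ) (hd : d + 1 < ℓ) (j : Fin (k ^ d)),
      z (mkNode d (by omega) j)
        = (((k : ℝ) ^ (ℓ - d) - (k : ℝ) ^ (ℓ - d - 1)) / ((k : ℝ) ^ (ℓ - d) - 1))
              * ht (mkNode d (by omega) j)
          + (((k : ℝ) ^ (ℓ - d - 1) - 1) / ((k : ℝ) ^ (ℓ - d) - 1))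
              * ∑ r : Fin k, z (childNode d hd j r))
    (hbroot : hb (mkNode 0 (by omega) ⟨0, by simp⟩) = z (mkNode 0 (by omega) ⟨0, by simp⟩))
    (hbrec : ∀ (d : ℕ) (hd : d + 1 < ℓ) (j : Fin (k ^ d)) (r : Fin k),
      hb (childNode d hd j r)
        = z (childNode d hd j r)
          + (1 / (k : ℝ)) * (hb (mkNode d (by omega) j) - ∑ r' : Fin k, z (childNode d hd j r'))) :
    Consistent hb
    ∧ (∀ t : TreeNode k ℓ → ℝ, Consistent t →
        ∑ v, (hb v - ht v) ^ 2 ≤ ∑ v, (t v - ht v) ^ 2)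
    ∧ (∀ t : TreeNode k ℓ → ℝ, Consistent t →
        ∑ v, (t v - ht v) ^ 2 = ∑ v, (hb v - ht v) ^ 2 → t = hb) := by
  classical
  have hk0 : 0 < k := by omega
  have hKne : (k : ℝ) ≠ 0 := by positivity
  have hcons : Consistent hb := by
    intro d hd j
    have e : ∑ r : Fin k, hb (childNode d hd j r)
        = (∑ r : Fin k, z (childNode d hd j r))
          + (k : ℝ) * ((1 / (k : ℝ))
              * (hb (mkNode d (by omega) j) - ∑ r' : Fin k, z (childNode d hd j r'))) := by
      rw [Finset.sum_congr rfl (fun r _ => hbrec d hd j r), Finset.sum_add_distrib,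
        Finset.sum_const, Finset.card_univ, Fintype.card_fin, nsmul_eq_mul]
    rw [e]
    field_simp
    ring
  have hA : ∀ j : Fin (k ^ (ℓ - 1)), TreeAux.Apath hb ht hk0 (ℓ - 1) (by omega) j = 0 :=
    TreeAux.Apath_leaf hb ht hk0 hk hℓ z hzleaf hzint hbroot hbrec
  have horth : ∀ s : TreeNode k ℓ → ℝ, Consistent s → ∑ v, (hb v - ht v) * s v = 0 :=
    fun s hs => TreeAux.ortho hb ht hk0 hℓ s hs hA
  have hdiff : ∀ t : TreeNode k ℓ → ℝ, Consistent t → Consistent (fun v => t v - hb v) := by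
    intro t hct d hd j
    simp only
    rw [hct d hd j, hcons d hd j, ← Finset.sum_sub_distrib]
  have expand : ∀ t : TreeNode k ℓ → ℝ, Consistent t →
      ∑ v, (t v - ht v) ^ 2 = ∑ v, (hb v - ht v) ^ 2 + ∑ v, (t v - hb v) ^ 2 := by
    intro t hct
    have h0 := horth (fun v => t v - hb v) (hdiff t hct)
    have e : ∀ v : TreeNode k ℓ, (t v - ht v) ^ 2
        = ((hb v - ht v) ^ 2 + (t v - hb v) ^ 2)
          + 2 * ((hb v - ht v) * (t v - hb v)) := fun v => by ring
    rw [Finset.sum_congr rfl fun v _ => e v, Finset.sum_add_distrib, Finset.sum_add_distrib,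
      ← Finset.mul_sum, h0, mul_zero, add_zero]
  refine ⟨hcons, fun t hct => ?_, fun t hct heq => ?_⟩
  · rw [expand t hct]
    exact le_add_of_nonneg_right (Finset.sum_nonneg fun v _ => sq_nonneg _)
  · have h2 : ∑ v, (t v - hb v) ^ 2 = 0 := by
      have := expand t hct
      rw [heq] at this
      linarith
    funext v
    have h3 := (Finset.sum_eq_zero_iff_of_nonneg
      (fun v _ => sq_nonneg (t v - hb v))).1 h2 v (Finset.mem_univ v)
    have h4 : t v - hb v = 0 := by
      have := sq_eq_zero_iff.1 h3
      exact this
    linarith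
end
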